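/- For 2 < p < 6 and ϑ(p,2) < θ < 1, the function N(θ,p) as defined (with N(1,p) = 1) satisfies N(θ,p) > 1. -/

import Mathlib

noncomputable def Nfun (θ p : ℝ) : ℝ :=
  (2 / (2 - p * (1 - θ))) ^ ((p - 2) / (2 * p * θ)) *
  ((p + 2) / 4) ^ ((6 - p) / (2 * p * θ)) *
  (2 * (2 - p * (1 - θ)) / ((2 * θ - 1) * p + 2)) ^ ((2 * p * θ - 3 * (p - 2)) / (2 * p * θ)) *
  (Real.Gamma (2 / (p - 2)) * Real.Gamma ((2 - p * (1 - θ)) / (p - 2) + 1 / 2) /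
    (Real.Gamma (2 / (p - 2) + 1 / 2) * Real.Gamma ((2 - p * (1 - θ)) / (p - 2)))) ^ ((p - 2) / (p * θ))

open Real Filter Finset Topology

namespace NfunProof

/-! ### Elementary log inequality `log(1+w) ≥ 2w/(2+w)` -/

lemma logB_deriv {x : ℝ} (h1 : (0:ℝ) < 1 + x) (h2 : (0:ℝ) < 2 + x) :
    HasDerivAt (fun w : ℝ => Real.log (1+w) - 2*w/(2+w))
      (1/(1+x) - 4/((2+x)^2)) x := by
  have := (((hasDerivAt_id x).const_add 1).log h1.ne').fun_sub
    ((((hasDerivAt_id x).const_mul 2)).fun_div ((hasDerivAt_id x).const_add 2) h2.ne')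
  simpa only [id_eq, show (2:ℝ)*1*(2+x) - 2*x*1 = 4 from by ring] using this

lemma logB_aux : ∀ w : ℝ, 0 ≤ w → 2*w/(2+w) ≤ Real.log (1+w) := by
  have key : MonotoneOn (fun w : ℝ => Real.log (1+w) - 2*w/(2+w)) (Set.Ici 0) := by
    apply monotoneOn_of_hasDerivWithinAt_nonneg (convex_Ici 0)
      (f' := fun w => 1/(1+w) - 4/((2+w)^2))
    · intro x hx
      simp only [Set.mem_Ici] at hx
      exact (logB_deriv (by linarith) (by linarith)).continuousAt.continuousWithinAt
    · intro x hx
      rw [interior_Ici] at hx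
      simp only [Set.mem_Ioi] at hx
      exact (logB_deriv (by linarith) (by linarith)).hasDerivWithinAt
    · intro x hx
      rw [interior_Ici] at hx
      simp only [Set.mem_Ioi] at hx
      rw [sub_nonneg, div_le_div_iff₀ (by positivity) (by linarith)]
      nlinarith [sq_nonneg x]
  intro w hw
  have := key (Set.self_mem_Ici) hw hw
  simp at this
  linarith

lemma logB_aux' {u : ℝ} (hu : 0 < u) : 2/(4*u+1) ≤ Real.log (2*u+1) - Real.log (2*u) := by
  have h := logB_aux (1/(2*u)) (by positivity)
  have h1 : (1:ℝ) + 1/(2*u) = (2*u+1)/(2*u) := by field_simp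
  have h2 : 2*(1/(2*u))/(2+1/(2*u)) = 2/(4*u+1) := by
    rw [div_eq_div_iff (by positivity) (by positivity)]
    field_simp
    ring
  rw [h1, h2, Real.log_div (by positivity) (by positivity)] at h
  exact h

/-! ### Telescoping tail bound -/

lemma tail_sum_le {u : ℝ} (hu : 0 < u) (n : ℕ) :
    ∑ k ∈ Finset.range n, (1/(u+k+1) - 1/(u+k+3/2)) ≤ 2/(4*u+3) := by
  have step : ∀ k ∈ Finset.range n, (1/(u+k+1) - 1/(u+k+3/2)) ≤
      ((1/2)/(u+(k:ℝ)+3/4) - (1/2)/(u+((k:ℕ)+1:ℕ)+3/4)) := by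
    intro k _
    have hk : (0:ℝ) ≤ (k:ℝ) := Nat.cast_nonneg k
    push_cast
    have h1 : (0:ℝ) < u+k+1 := by linarith
    have h2 : (0:ℝ) < u+k+3/2 := by linarith
    have h3 : (0:ℝ) < u+k+3/4 := by linarith
    have h4' : (0:ℝ) < u+(k+1)+3/4 := by linarith
    rw [div_sub_div _ _ h1.ne' h2.ne', div_sub_div _ _ h3.ne' h4'.ne',
      div_le_div_iff₀ (by positivity) (by positivity)]
    nlinarith
  have := Finset.sum_le_sum step
  refine this.trans ?_
  rw [Finset.sum_range_sub' (fun k => (1/2)/(u+(k:ℝ)+3/4))]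
  have h3 : (0:ℝ) < u+3/4 := by linarith
  have h4 : (0:ℝ) < u+(n:ℝ)+3/4 := by positivity
  have e0 : (1/2)/(u+(0:ℕ)+3/4) = (1/2)/(u+3/4) := by norm_num
  rw [e0]
  have e1 : (2:ℝ)/(4*u+3) = (1/2)/(u+3/4) := by
    rw [div_eq_div_iff (by positivity) h3.ne']; ring
  rw [e1]
  have : (0:ℝ) ≤ (1/2)/(u+(n:ℝ)+3/4) := by positivity
  linarith

/-! ### The functions -/

noncomputable def el (u : ℝ) : ℝ :=
  -Real.log u + (2*u-1) * (Real.log (2*u) - Real.log (2*u+1))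

noncomputable def phiN (n : ℕ) (u : ℝ) : ℝ :=
  el u + 2 * ∑ k ∈ Finset.range (n+1), (Real.log (u+k) - Real.log (u+k+1/2))

noncomputable def phi (u : ℝ) : ℝ :=
  el u + 2 * (Real.log (Real.Gamma (u+1/2)) - Real.log (Real.Gamma u))

noncomputable def lo (u : ℝ) : ℝ := Real.log (4*u+1) - Real.log (4*u+3)

noncomputable def chi (n : ℕ) (u : ℝ) : ℝ := phiN n u + lo u

noncomputable def chiD (n : ℕ) (u : ℝ) : ℝ :=
  (-(1/u) + (2*(Real.log (2*u) - Real.log (2*u+1)) + (2*u-1)*(2/(2*u) - 2/(2*u+1))))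
  + 2 * ∑ k ∈ Finset.range (n+1), (1/(u+(k:ℝ)) - 1/(u+(k:ℝ)+1/2))
  + (4/(4*u+1) - 4/(4*u+3))

lemma hasDerivAt_chi (n : ℕ) {u : ℝ} (hu : 0 < u) : HasDerivAt (chi n) (chiD n u) u := by
  have h2u : (0:ℝ) < 2*u := by linarith
  have h2u1 : (0:ℝ) < 2*u+1 := by linarith
  have hlogu : HasDerivAt (fun x : ℝ => -Real.log x) (-(1/u)) u := by
    simpa [one_div] using (Real.hasDerivAt_log hu.ne').fun_neg
  have hlog2u : HasDerivAt (fun x : ℝ => Real.log (2*x)) (2/(2*u)) u := by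
    simpa using ((hasDerivAt_id u).const_mul 2).log h2u.ne'
  have hlog2u1 : HasDerivAt (fun x : ℝ => Real.log (2*x+1)) (2/(2*u+1)) u := by
    simpa using (((hasDerivAt_id u).const_mul 2).add_const 1).log h2u1.ne'
  have hmul : HasDerivAt (fun x : ℝ => (2*x-1) * (Real.log (2*x) - Real.log (2*x+1)))
      (2*(Real.log (2*u) - Real.log (2*u+1)) + (2*u-1)*(2/(2*u) - 2/(2*u+1))) u := by
    have hl : HasDerivAt (fun x : ℝ => 2*x-1) 2 u := by
      simpa using ((hasDerivAt_id u).const_mul 2).sub_const 1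
    exact hl.mul (hlog2u.sub hlog2u1)
  have hsum : HasDerivAt (fun x : ℝ => ∑ k ∈ Finset.range (n+1),
      (Real.log (x+k) - Real.log (x+k+1/2)))
      (∑ k ∈ Finset.range (n+1), (1/(u+(k:ℝ)) - 1/(u+(k:ℝ)+1/2))) u := by
    apply HasDerivAt.fun_sum
    intro k _
    have hk : (0:ℝ) ≤ (k:ℝ) := Nat.cast_nonneg k
    have h1 : (0:ℝ) < u+k := by linarith
    have h2 : (0:ℝ) < u+k+1/2 := by linarith
    have d1 : HasDerivAt (fun x : ℝ => Real.log (x+k)) (1/(u+(k:ℝ))) u := by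
      simpa using ((hasDerivAt_id u).add_const (k:ℝ)).log h1.ne'
    have d2 : HasDerivAt (fun x : ℝ => Real.log (x+k+1/2)) (1/(u+(k:ℝ)+1/2)) u := by
      simpa using (((hasDerivAt_id u).add_const (k:ℝ)).add_const (1/2:ℝ)).log h2.ne'
    exact d1.sub d2
  have h4u1 : (0:ℝ) < 4*u+1 := by linarith
  have h4u3 : (0:ℝ) < 4*u+3 := by linarith
  have hlo : HasDerivAt lo (4/(4*u+1) - 4/(4*u+3)) u := by
    have d1 : HasDerivAt (fun x : ℝ => Real.log (4*x+1)) (4/(4*u+1)) u := by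
      simpa using (((hasDerivAt_id u).const_mul 4).add_const 1).log h4u1.ne'
    have d2 : HasDerivAt (fun x : ℝ => Real.log (4*x+3)) (4/(4*u+3)) u := by
      simpa using (((hasDerivAt_id u).const_mul 4).add_const 3).log h4u3.ne'
    exact d1.sub d2
  exact ((hlogu.add hmul).add ((hsum.const_mul 2))).add hlo

lemma chiD_nonpos (n : ℕ) {u : ℝ} (hu : 0 < u) : chiD n u ≤ 0 := by
  have hsplit : ∑ k ∈ Finset.range (n+1), (1/(u+(k:ℝ)) - 1/(u+(k:ℝ)+1/2))
      = (1/u - 1/(u+1/2)) + ∑ k ∈ Finset.range n, (1/(u+(k:ℝ)+1) - 1/(u+(k:ℝ)+3/2)) := by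
    rw [Finset.sum_range_succ' (fun k => (1/(u+(k:ℝ)) - 1/(u+(k:ℝ)+1/2))) n]
    push_cast
    rw [add_comm]
    congr 1
    · norm_num
    · apply Finset.sum_congr rfl; intro k _; ring_nf
  have htail := tail_sum_le hu n
  have hB := logB_aux' hu
  have hkey : -(1/u) + (2*u-1)*(2/(2*u) - 2/(2*u+1)) + 2*(1/u - 1/(u+1/2)) = 0 := by
    field_simp
    ring
  rw [chiD, hsplit]
  set S := ∑ k ∈ Finset.range n, (1/(u+(k:ℝ)+1) - 1/(u+(k:ℝ)+3/2)) with hS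
  set q := (2*u-1)*(2/(2*u) - 2/(2*u+1)) with hq
  set L1 := Real.log (2*u) with hL1
  set L2 := Real.log (2*u+1) with hL2
  set A := (4:ℝ)/(4*u+1) with hA
  set B := (4:ℝ)/(4*u+3) with hB3
  have hAB : 2*(2/(4*u+3)) = B := by rw [hB3]; ring
  have hA2 : 2*(2/(4*u+1)) = A := by rw [hA]; ring
  linarith [hB, htail, hkey, hAB, hA2]

lemma chi_antitone (n : ℕ) : AntitoneOn (chi n) (Set.Ioi 0) := by
  apply antitoneOn_of_hasDerivWithinAt_nonpos (convex_Ioi 0) (f' := chiD n)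
  · intro x hx
    exact (hasDerivAt_chi n hx).continuousAt.continuousWithinAt
  · intro x hx
    rw [interior_Ioi, Set.mem_Ioi] at hx
    exact (hasDerivAt_chi n hx).hasDerivWithinAt
  · intro x hx
    rw [interior_Ioi, Set.mem_Ioi] at hx
    exact chiD_nonpos n hx

lemma lo_lt {s t : ℝ} (hs : 0 < s) (hst : s < t) : lo s < lo t := by
  have ht : 0 < t := hs.trans hst
  rw [lo, lo, ← Real.log_div (by positivity) (by positivity),
    ← Real.log_div (by positivity) (by positivity)]
  apply Real.log_lt_log (by positivity)
  rw [div_lt_div_iff₀ (by positivity) (by positivity)]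
  nlinarith

/-! ### The limit -/

lemma log_gammaSeq {x : ℝ} (hx : 0 < x) {n : ℕ} (hn : n ≠ 0) :
    Real.log (Real.GammaSeq x n) =
      x * Real.log n + Real.log (n.factorial : ℝ)
        - ∑ k ∈ Finset.range (n+1), Real.log (x + k) := by
  have hn' : (0:ℝ) < n := by positivity
  have hfac : ((n.factorial) : ℝ) ≠ 0 := by positivity
  have hprod : ∀ j ∈ Finset.range (n+1), x + (j:ℝ) ≠ 0 := by
    intro j _
    have : (0:ℝ) ≤ (j:ℝ) := Nat.cast_nonneg j
    positivity
  rw [Real.GammaSeq, Real.log_div (by positivity) (Finset.prod_ne_zero_iff.mpr hprod),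
    Real.log_mul (by positivity) hfac, Real.log_rpow hn', Real.log_prod hprod]

lemma tendsto_log_gammaSeq {x : ℝ} (hx : 0 < x) :
    Tendsto (fun n => Real.log (Real.GammaSeq x n)) atTop (𝓝 (Real.log (Real.Gamma x))) :=
  ((Real.continuousAt_log (Real.Gamma_pos_of_pos hx).ne').tendsto).comp
    (Real.GammaSeq_tendsto_Gamma x)

lemma tendsto_combo {s t : ℝ} (hs : 0 < s) (ht : 0 < t) :
    Tendsto (fun n : ℕ => ∑ k ∈ Finset.range (n+1),
        ((Real.log (s+k) - Real.log (s+k+1/2)) - (Real.log (t+k) - Real.log (t+k+1/2))))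
      atTop
      (𝓝 ((Real.log (Real.Gamma (s+1/2)) - Real.log (Real.Gamma s))
          - (Real.log (Real.Gamma (t+1/2)) - Real.log (Real.Gamma t)))) := by
  have hlim := (((tendsto_log_gammaSeq (by linarith : (0:ℝ) < s+1/2)).sub
      (tendsto_log_gammaSeq hs)).sub
      ((tendsto_log_gammaSeq (by linarith : (0:ℝ) < t+1/2)).sub
      (tendsto_log_gammaSeq ht)))
  apply hlim.congr'
  filter_upwards [eventually_ge_atTop 1] with n hn
  have hn0 : n ≠ 0 := by omega
  rw [log_gammaSeq (by linarith : (0:ℝ) < s+1/2) hn0, log_gammaSeq hs hn0,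
    log_gammaSeq (by linarith : (0:ℝ) < t+1/2) hn0, log_gammaSeq ht hn0]
  rw [Finset.sum_sub_distrib, Finset.sum_sub_distrib, Finset.sum_sub_distrib]
  have e1 : ∑ k ∈ Finset.range (n+1), Real.log (s+1/2+(k:ℝ))
      = ∑ k ∈ Finset.range (n+1), Real.log (s+(k:ℝ)+1/2) := by
    apply Finset.sum_congr rfl; intro k _; ring_nf
  have e2 : ∑ k ∈ Finset.range (n+1), Real.log (t+1/2+(k:ℝ))
      = ∑ k ∈ Finset.range (n+1), Real.log (t+(k:ℝ)+1/2) := by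
    apply Finset.sum_congr rfl; intro k _; ring_nf
  rw [e1, e2]
  ring

/-! ### Strict monotonicity of `phi` -/

lemma phi_lt {s t : ℝ} (hs : 0 < s) (hst : s < t) : phi t < phi s := by
  have ht : 0 < t := hs.trans hst
  have hc : 0 < lo t - lo s := sub_pos.mpr (lo_lt hs hst)
  have hmono : ∀ n : ℕ, lo t - lo s ≤ phiN n s - phiN n t := by
    intro n
    have := chi_antitone n (Set.mem_Ioi.mpr hs) (Set.mem_Ioi.mpr ht) hst.le
    simp only [chi] at this
    linarith
  have hlim : Tendsto (fun n : ℕ => phiN n s - phiN n t) atTop (𝓝 (phi s - phi t)) := by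
    have h := tendsto_combo hs ht
    have heq : ∀ n : ℕ, phiN n s - phiN n t = (el s - el t)
        + 2 * (∑ k ∈ Finset.range (n+1),
          ((Real.log (s+k) - Real.log (s+k+1/2)) - (Real.log (t+k) - Real.log (t+k+1/2)))) := by
      intro n
      rw [phiN, phiN]
      simp only [Finset.sum_sub_distrib]
      ring
    have hphi : phi s - phi t = (el s - el t)
        + 2 * ((Real.log (Real.Gamma (s+1/2)) - Real.log (Real.Gamma s))
          - (Real.log (Real.Gamma (t+1/2)) - Real.log (Real.Gamma t))) := by
      rw [phi, phi]; ring
    rw [hphi]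
    exact Tendsto.congr (fun n => (heq n).symm) (tendsto_const_nhds.add (h.const_mul 2))
  have hfin : lo t - lo s ≤ phi s - phi t := ge_of_tendsto' hlim hmono
  linarith

end NfunProof

theorem Nfun_gt_one (p θ : ℝ) (hp1 : 2 < p) (hp2 : p < 6)
    (hθ1 : (p - 2) / p < θ) (hθ2 : θ < 1) : 1 < Nfun θ p := by
  have hp0 : (0:ℝ) < p := by linarith
  have hpm2 : (0:ℝ) < p - 2 := by linarith
  have hθp : p - 2 < p * θ := by
    have := (div_lt_iff₀ hp0).mp hθ1
    linarith [this]
  have hθ0 : 0 < θ := by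
    rcases le_or_gt θ 0 with h | h
    · exfalso; nlinarith
    · exact h
  have hpθ : (0:ℝ) < p * θ := by positivity
  have hnum : (0:ℝ) < 2 - p * (1 - θ) := by nlinarith
  set s : ℝ := (2 - p * (1 - θ)) / (p - 2) with hs_def
  set a : ℝ := 2 / (p - 2) with ha_def
  have hs : 0 < s := div_pos hnum hpm2
  have ha : 0 < a := by positivity
  have hsa : s < a := by
    rw [hs_def, ha_def, div_lt_div_iff₀ hpm2 hpm2]
    nlinarith [mul_pos (mul_pos hp0 (show (0:ℝ) < 1-θ by linarith)) hpm2]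
  set c : ℝ := (p - 2) / (2 * p * θ) with hc_def
  have hc : 0 < c := by positivity
  -- rewrite bases
  have hden3 : (0:ℝ) < (2 * θ - 1) * p + 2 := by nlinarith
  have hB1 : 2 / (2 - p * (1 - θ)) = a / s := by
    rw [ha_def, hs_def]
    field_simp
  have hB2 : (p + 2) / 4 = (2*a+1) / (2*a) := by
    rw [ha_def]
    field_simp
    ring
  have hB3 : 2 * (2 - p * (1 - θ)) / ((2 * θ - 1) * p + 2) = 2*s/(2*s+1) := by
    rw [hs_def]
    have h1 : (p-2) ≠ 0 := hpm2.ne'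
    rw [div_eq_div_iff hden3.ne' (by rw [← hs_def]; positivity)]
    field_simp
    ring
  have he2 : (6 - p) / (2 * p * θ) = c * (2*a-1) := by
    rw [hc_def, ha_def]
    field_simp
    ring
  have he3 : (2 * p * θ - 3 * (p - 2)) / (2 * p * θ) = c * (2*s-1) := by
    rw [hc_def, hs_def]
    field_simp
    ring
  have he4 : (p - 2) / (p * θ) = c * 2 := by
    rw [hc_def]
    field_simp
  have hGa := Real.Gamma_pos_of_pos ha
  have hGa2 := Real.Gamma_pos_of_pos (by linarith : (0:ℝ) < a + 1/2)
  have hGs := Real.Gamma_pos_of_pos hs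
  have hGs2 := Real.Gamma_pos_of_pos (by linarith : (0:ℝ) < s + 1/2)
  rw [Nfun, hB1, hB2, hB3, he2, he3, he4]
  have hbase1 : (0:ℝ) < a / s := by positivity
  have hbase2 : (0:ℝ) < (2*a+1)/(2*a) := by positivity
  have hbase3 : (0:ℝ) < 2*s/(2*s+1) := by positivity
  have hbase4 : (0:ℝ) < Real.Gamma a * Real.Gamma (s+1/2) /
      (Real.Gamma (a+1/2) * Real.Gamma s) := by positivity
  rw [Real.rpow_def_of_pos hbase1, Real.rpow_def_of_pos hbase2,
    Real.rpow_def_of_pos hbase3, Real.rpow_def_of_pos hbase4,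
    ← Real.exp_add, ← Real.exp_add, ← Real.exp_add]
  have hlogs : Real.log (a/s) = Real.log a - Real.log s := Real.log_div ha.ne' hs.ne'
  have hlog2 : Real.log ((2*a+1)/(2*a)) = Real.log (2*a+1) - Real.log (2*a) :=
    Real.log_div (by positivity) (by positivity)
  have hlog3 : Real.log (2*s/(2*s+1)) = Real.log (2*s) - Real.log (2*s+1) :=
    Real.log_div (by positivity) (by positivity)
  have hlog4 : Real.log (Real.Gamma a * Real.Gamma (s+1/2) /
      (Real.Gamma (a+1/2) * Real.Gamma s))
      = Real.log (Real.Gamma a) + Real.log (Real.Gamma (s+1/2))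
        - (Real.log (Real.Gamma (a+1/2)) + Real.log (Real.Gamma s)) := by
    rw [Real.log_div (by positivity) (by positivity),
      Real.log_mul hGa.ne' hGs2.ne', Real.log_mul hGa2.ne' hGs.ne']
  have hsum : Real.log (a / s) * c
      + Real.log ((2*a+1)/(2*a)) * (c * (2*a-1))
      + Real.log (2*s/(2*s+1)) * (c * (2*s-1))
      + Real.log (Real.Gamma a * Real.Gamma (s+1/2) /
          (Real.Gamma (a+1/2) * Real.Gamma s)) * (c * 2)
      = c * (NfunProof.phi s - NfunProof.phi a) := by
    rw [hlogs, hlog2, hlog3, hlog4, NfunProof.phi, NfunProof.phi,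
      NfunProof.el, NfunProof.el]
    ring
  rw [hsum]
  have hphi : NfunProof.phi a < NfunProof.phi s := NfunProof.phi_lt hs hsa
  calc (1:ℝ) = Real.exp 0 := Real.exp_zero.symm
    _ < Real.exp (c * (NfunProof.phi s - NfunProof.phi a)) := by
        apply Real.exp_lt_exp.mpr
        have : 0 < NfunProof.phi s - NfunProof.phi a := by linarith
        positivity
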